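/- (Pointwise decomposition of R[P], two-dimensional case) Let n > 2 be a real number, α > 0, and let P ∈ C³((0,∞) × ℝ) be a function of (s,θ). In terms of partial derivatives P_s, P_θ, P_{ss}, P_{sθ}, P_{θθ}, define |DP|² := α² P_s² + P_θ²/s², the pairing DP·DQ := α² P_s Q_s + P_θ Q_θ/s², the operator L Q := α²(Q_{ss} + (n-1) Q_s/s) + Q_{θθ}/s², and R[P] := ½ L(|DP|²) − α² P_s ∂_s(L P) − (P_θ/s²) ∂_θ(L P) − (1/n)(L P)². Then the following identity holds pointwise on (0,∞) × ℝ: R[P] = α⁴(1 − 1/n) [ P_{ss} − P_s/s − P_{θθ}/(α²(n-1)s²) ]² + (2α²/s²) [ P_{sθ} − P_θ/s ]² + s^{-4} [ ((n-2)/(n-1)) P_{θθ}² − (n-2) α² P_θ² ]. -/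

import Mathlib

open Real Set

noncomputable section

/-- Partial derivative in the first (radial) variable `s`. -/
def pds (f : ℝ × ℝ → ℝ) (z : ℝ × ℝ) : ℝ := deriv (fun s => f (s, z.2)) z.1

/-- Partial derivative in the second (angular) variable `θ`. -/
def pdt (f : ℝ × ℝ → ℝ) (z : ℝ × ℝ) : ℝ := deriv (fun θ => f (z.1, θ)) z.2

/-- `|DP|² = α² P_s² + P_θ²/s²`. -/
def DP2 (α : ℝ) (P : ℝ × ℝ → ℝ) (z : ℝ × ℝ) : ℝ :=
  α^2 * (pds P z)^2 + (pdt P z)^2 / z.1^2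

/-- The operator `L Q = α²(Q_{ss} + (n-1)Q_s/s) + Q_{θθ}/s²`. -/
def L2 (α n : ℝ) (Q : ℝ × ℝ → ℝ) (z : ℝ × ℝ) : ℝ :=
  α^2 * (pds (pds Q) z + (n - 1) * pds Q z / z.1) + pdt (pdt Q) z / z.1^2

/-- `R[P] = ½ L(|DP|²) − α² P_s ∂_s(LP) − (P_θ/s²) ∂_θ(LP) − (1/n)(LP)²`. -/
def R2 (α n : ℝ) (P : ℝ × ℝ → ℝ) (z : ℝ × ℝ) : ℝ :=
  (1/2) * L2 α n (DP2 α P) z - α^2 * pds P z * pds (L2 α n P) z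
    - (pdt P z / z.1^2) * pdt (L2 α n P) z - (1/n) * (L2 α n P z)^2

namespace R2aux

abbrev U : Set (ℝ × ℝ) := Set.Ioi (0:ℝ) ×ˢ Set.univ

lemma hUopen : IsOpen U := isOpen_Ioi.prod isOpen_univ

lemma diffAt {F : Type*} [NormedAddCommGroup F] [NormedSpace ℝ F]
    {m : WithTop ℕ∞} {g : ℝ × ℝ → F} (hg : ContDiffOn ℝ m g U) (hm : 1 ≤ m)
    {z : ℝ × ℝ} (hz : z ∈ U) : DifferentiableAt ℝ g z :=
  (hg.differentiableOn (zero_lt_one.trans_le hm).ne').differentiableAt (hUopen.mem_nhds hz)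

lemma hasDerivAt_pds {g : ℝ × ℝ → ℝ} {z : ℝ × ℝ} (hg : DifferentiableAt ℝ g z) :
    HasDerivAt (fun s => g (s, z.2)) (pds g z) z.1 := by
  have hline : DifferentiableAt ℝ (fun s : ℝ => ((s, z.2) : ℝ × ℝ)) z.1 :=
    differentiableAt_id.prodMk (differentiableAt_const _)
  exact (hg.comp z.1 hline).hasDerivAt

lemma hasDerivAt_pdt {g : ℝ × ℝ → ℝ} {z : ℝ × ℝ} (hg : DifferentiableAt ℝ g z) :
    HasDerivAt (fun t => g (z.1, t)) (pdt g z) z.2 := by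
  have hline : DifferentiableAt ℝ (fun t : ℝ => ((z.1, t) : ℝ × ℝ)) z.2 :=
    (differentiableAt_const _).prodMk differentiableAt_id
  exact (hg.comp z.2 hline).hasDerivAt

lemma pds_eq_fderiv {g : ℝ × ℝ → ℝ} {z : ℝ × ℝ} (hg : DifferentiableAt ℝ g z) :
    pds g z = fderiv ℝ g z (1, 0) := by
  have h1 : HasDerivAt (fun s : ℝ => ((s, z.2) : ℝ × ℝ)) ((1:ℝ), (0:ℝ)) z.1 :=
    (hasDerivAt_id _).prodMk (hasDerivAt_const _ _)
  exact (hg.hasFDerivAt.comp_hasDerivAt z.1 h1).deriv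

lemma pdt_eq_fderiv {g : ℝ × ℝ → ℝ} {z : ℝ × ℝ} (hg : DifferentiableAt ℝ g z) :
    pdt g z = fderiv ℝ g z (0, 1) := by
  have h1 : HasDerivAt (fun t : ℝ => ((z.1, t) : ℝ × ℝ)) ((0:ℝ), (1:ℝ)) z.2 :=
    (hasDerivAt_const _ _).prodMk (hasDerivAt_id _)
  exact (hg.hasFDerivAt.comp_hasDerivAt z.2 h1).deriv

lemma contDiffOn_pds {m n : WithTop ℕ∞} {g : ℝ × ℝ → ℝ} (hg : ContDiffOn ℝ n g U)
    (hmn : m + 1 ≤ n) : ContDiffOn ℝ m (pds g) U := by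
  have hf : ContDiffOn ℝ m (fderiv ℝ g) U := hg.fderiv_of_isOpen hUopen hmn
  have h2 : ContDiffOn ℝ m (fun w => fderiv ℝ g w (1, 0)) U := hf.clm_apply contDiffOn_const
  exact h2.congr fun w hw =>
    pds_eq_fderiv (diffAt hg (le_trans le_add_self hmn) hw)

lemma contDiffOn_pdt {m n : WithTop ℕ∞} {g : ℝ × ℝ → ℝ} (hg : ContDiffOn ℝ n g U)
    (hmn : m + 1 ≤ n) : ContDiffOn ℝ m (pdt g) U := by
  have hf : ContDiffOn ℝ m (fderiv ℝ g) U := hg.fderiv_of_isOpen hUopen hmn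
  have h2 : ContDiffOn ℝ m (fun w => fderiv ℝ g w (0, 1)) U := hf.clm_apply contDiffOn_const
  exact h2.congr fun w hw =>
    pdt_eq_fderiv (diffAt hg (le_trans le_add_self hmn) hw)

lemma pds_congr {g h : ℝ × ℝ → ℝ} {z : ℝ × ℝ} (he : g =ᶠ[nhds z] h) : pds g z = pds h z := by
  apply Filter.EventuallyEq.deriv_eq
  have hc : ContinuousAt (fun s : ℝ => ((s, z.2) : ℝ × ℝ)) z.1 :=
    (continuous_id.prodMk continuous_const).continuousAt
  exact hc.preimage_mem_nhds he

lemma pdt_congr {g h : ℝ × ℝ → ℝ} {z : ℝ × ℝ} (he : g =ᶠ[nhds z] h) : pdt g z = pdt h z := by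
  apply Filter.EventuallyEq.deriv_eq
  have hc : ContinuousAt (fun t : ℝ => ((z.1, t) : ℝ × ℝ)) z.2 :=
    (continuous_const.prodMk continuous_id).continuousAt
  exact hc.preimage_mem_nhds he

lemma pds_pdt_comm {g : ℝ × ℝ → ℝ} {z : ℝ × ℝ} (hg : ContDiffOn ℝ 2 g U) (hz : z ∈ U) :
    pds (pdt g) z = pdt (pds g) z := by
  have hgat : ContDiffAt ℝ 2 g z := hg.contDiffAt (hUopen.mem_nhds hz)
  have hsymm := hgat.isSymmSndFDerivAt (by simp)
  have hfd : ContDiffOn ℝ 1 (fderiv ℝ g) U := hg.fderiv_of_isOpen hUopen (by norm_num)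
  have hdf : DifferentiableAt ℝ (fderiv ℝ g) z := diffAt hfd le_rfl hz
  have hdg : ∀ w ∈ U, DifferentiableAt ℝ g w := fun w hw => diffAt hg one_le_two hw
  have hev2 : pdt g =ᶠ[nhds z] fun w => fderiv ℝ g w (0, 1) :=
    Filter.eventuallyEq_of_mem (hUopen.mem_nhds hz) fun w hw => pdt_eq_fderiv (hdg w hw)
  have hev1 : pds g =ᶠ[nhds z] fun w => fderiv ℝ g w (1, 0) :=
    Filter.eventuallyEq_of_mem (hUopen.mem_nhds hz) fun w hw => pds_eq_fderiv (hdg w hw)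
  have hd2 : DifferentiableAt ℝ (fun w => fderiv ℝ g w (0, 1)) z :=
    hdf.clm_apply (differentiableAt_const _)
  have hd1 : DifferentiableAt ℝ (fun w => fderiv ℝ g w (1, 0)) z :=
    hdf.clm_apply (differentiableAt_const _)
  have e1 : pds (pdt g) z = fderiv ℝ (fderiv ℝ g) z (1, 0) (0, 1) := by
    rw [pds_congr hev2, pds_eq_fderiv hd2, fderiv_clm_apply hdf (differentiableAt_const _)]
    simp
  have e2 : pdt (pds g) z = fderiv ℝ (fderiv ℝ g) z (0, 1) (1, 0) := by
    rw [pdt_congr hev1, pdt_eq_fderiv hd1, fderiv_clm_apply hdf (differentiableAt_const _)]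
    simp
  rw [e1, e2, hsymm]

end R2aux

set_option maxHeartbeats 2000000 in
open R2aux in
/-- Pointwise decomposition of `R[P]` in the two-dimensional
case, into a sum of two squares plus the angular remainder `k[P]/s⁴`. -/
theorem R2_decomposition
    (n α : ℝ) (hn : 2 < n) (hα : 0 < α)
    (P : ℝ × ℝ → ℝ) (hP : ContDiffOn ℝ 3 P (Set.Ioi (0:ℝ) ×ˢ Set.univ)) :
    ∀ z ∈ Set.Ioi (0:ℝ) ×ˢ (Set.univ : Set ℝ),
      R2 α n P z =
        α^4 * (1 - 1/n) *
          (pds (pds P) z - pds P z / z.1 - pdt (pdt P) z / (α^2 * (n-1) * z.1^2))^2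
        + (2*α^2 / z.1^2) * (pds (pdt P) z - pdt P z / z.1)^2
        + (((n-2)/(n-1)) * (pdt (pdt P) z)^2 - (n-2) * α^2 * (pdt P z)^2) / z.1^4 := by
  intro z hz
  have hs : (0:ℝ) < z.1 := hz.1
  have hs' : z.1 ≠ 0 := ne_of_gt hs
  have hn0 : n ≠ 0 := by linarith
  have hn1 : n - 1 ≠ 0 := by intro h; rw [sub_eq_zero] at h; linarith
  have hα' : α ≠ 0 := ne_of_gt hα
  have hP3 : ContDiffOn ℝ 3 P U := hP
  have hP2 : ContDiffOn ℝ 2 P U := hP3.of_le (by norm_num)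
  have hA : ContDiffOn ℝ 2 (pds P) U := contDiffOn_pds hP3 (by norm_num)
  have hB : ContDiffOn ℝ 2 (pdt P) U := contDiffOn_pdt hP3 (by norm_num)
  have hA1 : ContDiffOn ℝ 1 (pds (pds P)) U := contDiffOn_pds hA (by norm_num)
  have hA2 : ContDiffOn ℝ 1 (pdt (pds P)) U := contDiffOn_pdt hA (by norm_num)
  have hB1 : ContDiffOn ℝ 1 (pds (pdt P)) U := contDiffOn_pds hB (by norm_num)
  have hB2 : ContDiffOn ℝ 1 (pdt (pdt P)) U := contDiffOn_pdt hB (by norm_num)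
  -- Clairaut symmetry
  have symP : ∀ w ∈ U, pdt (pds P) w = pds (pdt P) w :=
    fun w hw => (pds_pdt_comm hP2 hw).symm
  have hsym2 : pds (pds (pdt P)) z = pdt (pds (pds P)) z := by
    have h1 : pds (pds (pdt P)) z = pds (pdt (pds P)) z :=
      pds_congr (Filter.eventuallyEq_of_mem (hUopen.mem_nhds hz) fun w hw => (symP w hw).symm)
    rw [h1, pds_pdt_comm hA hz]
  have hsym3 : pdt (pdt (pds P)) z = pds (pdt (pdt P)) z := by
    have h1 : pdt (pdt (pds P)) z = pdt (pds (pdt P)) z :=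
      pdt_congr (Filter.eventuallyEq_of_mem (hUopen.mem_nhds hz) symP)
    rw [h1, ← pds_pdt_comm hB hz]
  -- slice derivatives at z
  have d1 : HasDerivAt (fun s => pds P (s, z.2)) (pds (pds P) z) z.1 :=
    hasDerivAt_pds (diffAt hA one_le_two hz)
  have d2 : HasDerivAt (fun s => pdt P (s, z.2)) (pds (pdt P) z) z.1 :=
    hasDerivAt_pds (diffAt hB one_le_two hz)
  have d3 : HasDerivAt (fun s => pds (pds P) (s, z.2)) (pds (pds (pds P)) z) z.1 :=
    hasDerivAt_pds (diffAt hA1 le_rfl hz)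
  have d4 : HasDerivAt (fun s => pds (pdt P) (s, z.2)) (pds (pds (pdt P)) z) z.1 :=
    hasDerivAt_pds (diffAt hB1 le_rfl hz)
  have d5 : HasDerivAt (fun s => pdt (pdt P) (s, z.2)) (pds (pdt (pdt P)) z) z.1 :=
    hasDerivAt_pds (diffAt hB2 le_rfl hz)
  have e1 : HasDerivAt (fun t => pds P (z.1, t)) (pdt (pds P) z) z.2 :=
    hasDerivAt_pdt (diffAt hA one_le_two hz)
  have e2 : HasDerivAt (fun t => pdt P (z.1, t)) (pdt (pdt P) z) z.2 :=
    hasDerivAt_pdt (diffAt hB one_le_two hz)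
  have e3 : HasDerivAt (fun t => pds (pds P) (z.1, t)) (pdt (pds (pds P)) z) z.2 :=
    hasDerivAt_pdt (diffAt hA1 le_rfl hz)
  have e4 : HasDerivAt (fun t => pdt (pds P) (z.1, t)) (pdt (pdt (pds P)) z) z.2 :=
    hasDerivAt_pdt (diffAt hA2 le_rfl hz)
  have e5 : HasDerivAt (fun t => pdt (pdt P) (z.1, t)) (pdt (pdt (pdt P)) z) z.2 :=
    hasDerivAt_pdt (diffAt hB2 le_rfl hz)
  -- first s-derivative of DP2, on all of U
  have eDS : ∀ w ∈ U, pds (DP2 α P) w =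
      2*α^2*pds P w*pds (pds P) w + 2*pdt P w*pds (pdt P) w/w.1^2 - 2*(pdt P w)^2/w.1^3 := by
    intro w hw
    have hws : (0:ℝ) < w.1 := hw.1
    have hws' : w.1 ≠ 0 := ne_of_gt hws
    have h1 : HasDerivAt (fun s => pds P (s, w.2)) (pds (pds P) w) w.1 :=
      hasDerivAt_pds (diffAt hA one_le_two hw)
    have h2 : HasDerivAt (fun s => pdt P (s, w.2)) (pds (pdt P) w) w.1 :=
      hasDerivAt_pds (diffAt hB one_le_two hw)
    have key : HasDerivAt (fun s => DP2 α P (s, w.2))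
        (2*α^2*pds P w*pds (pds P) w + 2*pdt P w*pds (pdt P) w/w.1^2 - 2*(pdt P w)^2/w.1^3)
        w.1 := by
      have hcomb := ((h1.pow 2).const_mul (α^2)).add
        ((h2.pow 2).div (hasDerivAt_pow 2 w.1) (pow_ne_zero 2 hws'))
      refine hcomb.congr_deriv ?_
      all_goals (simp only [Prod.mk.eta, Pi.pow_apply, Pi.mul_apply]; push_cast; field_simp; ring)
    exact key.deriv
  -- first t-derivative of DP2, on all of U
  have eDT : ∀ w ∈ U, pdt (DP2 α P) w =
      2*α^2*pds P w*pdt (pds P) w + 2*pdt P w*pdt (pdt P) w/w.1^2 := by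
    intro w hw
    have h1 : HasDerivAt (fun t => pds P (w.1, t)) (pdt (pds P) w) w.2 :=
      hasDerivAt_pdt (diffAt hA one_le_two hw)
    have h2 : HasDerivAt (fun t => pdt P (w.1, t)) (pdt (pdt P) w) w.2 :=
      hasDerivAt_pdt (diffAt hB one_le_two hw)
    have key : HasDerivAt (fun t => DP2 α P (w.1, t))
        (2*α^2*pds P w*pdt (pds P) w + 2*pdt P w*pdt (pdt P) w/w.1^2) w.2 := by
      have hcomb := ((h1.pow 2).const_mul (α^2)).add ((h2.pow 2).div_const (w.1^2))
      refine hcomb.congr_deriv ?_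
      all_goals (simp only [Prod.mk.eta, Pi.pow_apply, Pi.mul_apply]; push_cast; field_simp)
    exact key.deriv
  -- second s-derivative of DP2 at z
  have eDSS : pds (pds (DP2 α P)) z =
      2*α^2*((pds (pds P) z)^2 + pds P z*pds (pds (pds P)) z)
        + (2*(pds (pdt P) z)^2 + 2*pdt P z*pds (pds (pdt P)) z)/z.1^2
        - 8*pdt P z*pds (pdt P) z/z.1^3 + 6*(pdt P z)^2/z.1^4 := by
    have hev : pds (DP2 α P) =ᶠ[nhds z] (fun w =>
        2*α^2*pds P w*pds (pds P) w + 2*pdt P w*pds (pdt P) w/w.1^2 - 2*(pdt P w)^2/w.1^3) :=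
      Filter.eventuallyEq_of_mem (hUopen.mem_nhds hz) eDS
    rw [pds_congr hev]
    have key : HasDerivAt (fun s =>
        2*α^2*pds P (s, z.2)*pds (pds P) (s, z.2)
          + 2*pdt P (s, z.2)*pds (pdt P) (s, z.2)/s^2 - 2*(pdt P (s, z.2))^2/s^3)
        (2*α^2*((pds (pds P) z)^2 + pds P z*pds (pds (pds P)) z)
          + (2*(pds (pdt P) z)^2 + 2*pdt P z*pds (pds (pdt P)) z)/z.1^2
          - 8*pdt P z*pds (pdt P) z/z.1^3 + 6*(pdt P z)^2/z.1^4) z.1 := by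
      have hcomb := (((d1.const_mul (2*α^2)).mul d3).add
          (((d2.const_mul 2).mul d4).div (hasDerivAt_pow 2 z.1) (pow_ne_zero 2 hs'))).sub
          (((d2.pow 2).const_mul 2).div (hasDerivAt_pow 3 z.1) (pow_ne_zero 3 hs'))
      refine hcomb.congr_deriv ?_
      all_goals (simp only [Prod.mk.eta, Pi.pow_apply, Pi.mul_apply]; push_cast; field_simp; ring)
    exact key.deriv
  -- second t-derivative of DP2 at z
  have eDTT : pdt (pdt (DP2 α P)) z =
      2*α^2*((pdt (pds P) z)^2 + pds P z*pdt (pdt (pds P)) z)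
        + (2*(pdt (pdt P) z)^2 + 2*pdt P z*pdt (pdt (pdt P)) z)/z.1^2 := by
    have hev : pdt (DP2 α P) =ᶠ[nhds z] (fun w =>
        2*α^2*pds P w*pdt (pds P) w + 2*pdt P w*pdt (pdt P) w/w.1^2) :=
      Filter.eventuallyEq_of_mem (hUopen.mem_nhds hz) eDT
    rw [pdt_congr hev]
    have key : HasDerivAt (fun t =>
        2*α^2*pds P (z.1, t)*pdt (pds P) (z.1, t)
          + 2*pdt P (z.1, t)*pdt (pdt P) (z.1, t)/(z.1, t).1^2)
        (2*α^2*((pdt (pds P) z)^2 + pds P z*pdt (pdt (pds P)) z)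
          + (2*(pdt (pdt P) z)^2 + 2*pdt P z*pdt (pdt (pdt P)) z)/z.1^2) z.2 := by
      have hcomb := ((e1.const_mul (2*α^2)).mul e4).add
          (((e2.const_mul 2).mul e5).div_const (z.1^2))
      refine hcomb.congr_deriv ?_
      all_goals (simp only [Prod.mk.eta, Pi.pow_apply, Pi.mul_apply]; push_cast; field_simp)
    exact key.deriv
  -- s-derivative of L2 P at z
  have eLs : pds (L2 α n P) z =
      α^2*(pds (pds (pds P)) z + (n-1)*(pds (pds P) z/z.1 - pds P z/z.1^2))
        + pds (pdt (pdt P)) z/z.1^2 - 2*pdt (pdt P) z/z.1^3 := by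
    have key : HasDerivAt (fun s => L2 α n P (s, z.2))
        (α^2*(pds (pds (pds P)) z + (n-1)*(pds (pds P) z/z.1 - pds P z/z.1^2))
          + pds (pdt (pdt P)) z/z.1^2 - 2*pdt (pdt P) z/z.1^3) z.1 := by
      have hcomb := ((d3.add ((d1.const_mul (n-1)).div (hasDerivAt_id' (x := z.1)) hs')).const_mul
          (α^2)).add (d5.div (hasDerivAt_pow 2 z.1) (pow_ne_zero 2 hs'))
      refine hcomb.congr_deriv ?_
      all_goals (simp only [Prod.mk.eta, Pi.pow_apply, Pi.mul_apply]; push_cast; field_simp; ring)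
    exact key.deriv
  -- t-derivative of L2 P at z
  have eLt : pdt (L2 α n P) z =
      α^2*(pdt (pds (pds P)) z + (n-1)*pdt (pds P) z/z.1) + pdt (pdt (pdt P)) z/z.1^2 := by
    have key : HasDerivAt (fun t => L2 α n P (z.1, t))
        (α^2*(pdt (pds (pds P)) z + (n-1)*pdt (pds P) z/z.1) + pdt (pdt (pdt P)) z/z.1^2) z.2 := by
      have hcomb := ((e3.add ((e1.const_mul (n-1)).div_const z.1)).const_mul (α^2)).add
          (e5.div_const (z.1^2))
      refine hcomb.congr_deriv ?_
      all_goals (simp only [Prod.mk.eta, Pi.pow_apply, Pi.mul_apply])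
    exact key.deriv
  have eDS_z := eDS z hz
  have symPz := symP z hz
  -- unfold and finish
  simp only [R2]
  rw [show L2 α n (DP2 α P) z = α^2*(pds (pds (DP2 α P)) z
        + (n-1)*pds (DP2 α P) z/z.1) + pdt (pdt (DP2 α P)) z/z.1^2 from rfl,
      show L2 α n P z = α^2*(pds (pds P) z + (n-1)*pds P z/z.1) + pdt (pdt P) z/z.1^2 from rfl,
      eDSS, eDS_z, eDTT, eLs, eLt, hsym2, hsym3, symPz]
  field_simp
  ring
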